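/- Let D ⊆ ℝ^d be open and let ψ and ψ^K (K ≥ 1) be locally Lipschitz vector fields on the closure of D. Assume there exist A ≥ 1, c > 0, μ > 0 and ε ∈ (0,1] such that: (A1) (ψ(x) − ψ(y))·(x − y) ≤ −μ ‖x‖₂ ‖x − y‖₂² for every x ∈ D with ‖x‖₂ ≥ A and every y ∈ D with ‖y − x‖₂ ≤ ε; (A2) ‖ψ(x) − ψ^K(x)‖₂ ≤ c (1 + ‖x‖₂)/K for every x ∈ D and K ≥ 1. Let φ and φ^K be the flows of ψ and ψ^K, with T_D(x₀) and T^K_D(x₁) the maximal times during which they remain in D, and T_{D,ε}(x₀) = sup{ t ∈ [0, T_D(x₀)) : for all s ≤ t, the closed ball of radius ε around φ(x₀,s) is contained in D }. Then, setting M = 3c/μ, there exists L ≥ 0 such that for all T ≥ 0, η > 0, all K ≥ 2·max(M,η)·exp((L + 1/M)T)/ε, all x₀ ∈ D and all x₁ ∈ D with ‖x₁ − x₀‖₂ ≤ η/K: T^K_D(x₁) ≥ min(T_{D,ε}(x₀), T) and sup_{t < min(T_{D,ε}(x₀), T)} ‖φ(x₀,t) − φ^K(x₁,t)‖₂ ≤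 max(M,η)·exp((L + 1/M)T)/K. -/

import Mathlib

open Real Set Filter ENNReal

/-- `T_{D,ε}(x₀)`: the supremum of the times `s` (smaller than the lifetime
`Tmax x₀`) such that, up to time `s`, the closed `ε`-ball around the flow
`φ x₀` stays inside `D`. -/
noncomputable def TDeps {n : ℕ} (D : Set (EuclideanSpace ℝ (Fin n))) (ε : ℝ)
    (Tmax : EuclideanSpace ℝ (Fin n) → ℝ≥0∞)
    (φ : EuclideanSpace ℝ (Fin n) → ℝ → EuclideanSpace ℝ (Fin n))
    (x₀ : EuclideanSpace ℝ (Fin n)) : ℝ≥0∞ :=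
  sSup {s : ℝ≥0∞ | s < Tmax x₀ ∧ ∀ u : ℝ, 0 ≤ u → ENNReal.ofReal u ≤ s →
    Metric.closedBall (φ x₀ u) ε ⊆ D}

lemma locallyLip_compact {E F : Type*} [MetricSpace E] [MetricSpace F]
    {s : Set E} (hs : IsCompact s) {f : E → F}
    (hf : ∀ x ∈ s, ∃ t ∈ nhdsWithin x s, ∃ L : NNReal, LipschitzOnWith L f t) :
    ∃ L : ℝ, 0 ≤ L ∧ ∀ x ∈ s, ∀ y ∈ s, dist (f x) (f y) ≤ L * dist x y := by
  rcases s.eq_empty_or_nonempty with rfl | hne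
  · exact ⟨0, le_rfl, by simp⟩
  have hcont : ContinuousOn f s := by
    intro x hx
    obtain ⟨t, ht, L, hL⟩ := hf x hx
    have hxt : x ∈ t := mem_of_mem_nhdsWithin hx ht
    exact (hL.continuousOn.continuousWithinAt hxt).mono_of_mem_nhdsWithin ht
  obtain ⟨Cb, hCb⟩ := Metric.isBounded_iff.1 (hs.image_of_continuousOn hcont).isBounded
  have hloc : ∀ x ∈ s, ∃ r > 0, ∃ L : ℝ, 0 ≤ L ∧
      ∀ a ∈ Metric.ball x r ∩ s, ∀ b ∈ Metric.ball x r ∩ s,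
        dist (f a) (f b) ≤ L * dist a b := by
    intro x hx
    obtain ⟨t, ht, L, hL⟩ := hf x hx
    obtain ⟨r, hr, hrt⟩ := Metric.mem_nhdsWithin_iff.1 ht
    exact ⟨r, hr, L, L.coe_nonneg, fun a ha b hb => hL.dist_le_mul a (hrt ha) b (hrt hb)⟩
  choose! r hr L hL0 hLip using hloc
  obtain ⟨t, hts, hcov⟩ := hs.elim_nhds_subcover (fun x => Metric.ball x (r x / 2))
    (fun x hx => Metric.ball_mem_nhds x (by linarith [hr x hx]))
  have htne : t.Nonempty := by
    obtain ⟨x, hx⟩ := hne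
    obtain ⟨i, hi, _⟩ := Set.mem_iUnion₂.1 (hcov hx)
    exact ⟨i, hi⟩
  obtain ⟨L0, hL0'⟩ := (t.image L).exists_le
  obtain ⟨i0, hi0, hmin⟩ := t.exists_min_image (fun x => r x / 2) htne
  set ρ := r i0 / 2 with hρ
  have hρpos : 0 < ρ := by have := hr i0 (hts i0 hi0); positivity
  refine ⟨max (max L0 0) (Cb / ρ), le_trans (le_max_right _ _) (le_max_left _ _), ?_⟩
  intro x hx y hy
  by_cases hd : dist x y < ρ
  · obtain ⟨i, hi, hxi⟩ := Set.mem_iUnion₂.1 (hcov hx)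
    have hyi : y ∈ Metric.ball i (r i) := by
      rw [Metric.mem_ball] at hxi ⊢
      have : ρ ≤ r i / 2 := hmin i hi
      calc dist y i ≤ dist y x + dist x i := dist_triangle _ _ _
        _ < ρ + r i / 2 := by rw [dist_comm y x]; linarith
        _ ≤ r i := by linarith
    have hxi' : x ∈ Metric.ball i (r i) :=
      Metric.ball_subset_ball (by linarith [hr i (hts i hi)]) hxi
    have := hLip i (hts i hi) x ⟨hxi', hx⟩ y ⟨hyi, hy⟩
    calc dist (f x) (f y) ≤ L i * dist x y := this
      _ ≤ max (max L0 0) (Cb / ρ) * dist x y := by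
          apply mul_le_mul_of_nonneg_right _ dist_nonneg
          exact le_trans (le_trans (hL0' _ (Finset.mem_image_of_mem L hi)) (le_max_left _ _))
            (le_max_left _ _)
  · push_neg at hd
    have h1 : dist (f x) (f y) ≤ Cb := hCb ⟨x, hx, rfl⟩ ⟨y, hy, rfl⟩
    calc dist (f x) (f y) ≤ Cb := h1
      _ = Cb / ρ * ρ := by field_simp
      _ ≤ Cb / ρ * dist x y := by
          apply mul_le_mul_of_nonneg_left hd
          have hCbnn : 0 ≤ Cb := le_trans dist_nonneg (hCb ⟨x, hx, rfl⟩ ⟨x, hx, rfl⟩)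
          positivity
      _ ≤ max (max L0 0) (Cb / ρ) * dist x y :=
          mul_le_mul_of_nonneg_right (le_max_right _ _) dist_nonneg

set_option maxHeartbeats 1000000 in
/-- Uniform approximation of the flow of `ψ` by the flows of the perturbed
fields `ψ^K`, under the strengthened non-expansivity (A1) and the `O(1/K)`
closeness (A2). Here `M = 3c/μ`. -/
theorem stmt19 {n : ℕ} (D : Set (EuclideanSpace ℝ (Fin n))) (hD : IsOpen D)
    (ψ : EuclideanSpace ℝ (Fin n) → EuclideanSpace ℝ (Fin n))
    (ψK : ℝ → EuclideanSpace ℝ (Fin n) → EuclideanSpace ℝ (Fin n))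
    (hψLip : ∀ x ∈ closure D, ∃ s ∈ nhdsWithin x (closure D), ∃ L : NNReal,
      LipschitzOnWith L ψ s)
    (hψKLip : ∀ K : ℝ, 1 ≤ K → ∀ x ∈ closure D, ∃ s ∈ nhdsWithin x (closure D),
      ∃ L : NNReal, LipschitzOnWith L (ψK K) s)
    (A c μ ε : ℝ) (hA : 1 ≤ A) (hc : 0 < c) (hμ : 0 < μ) (hε : ε ∈ Set.Ioc (0 : ℝ) 1)
    -- (A1)
    (hA1 : ∀ x ∈ D, A ≤ ‖x‖ → ∀ y ∈ D, ‖y - x‖ ≤ ε →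
      inner ℝ (ψ x - ψ y) (x - y) ≤ -μ * ‖x‖ * ‖x - y‖ ^ 2)
    -- (A2)
    (hA2 : ∀ x ∈ D, ∀ K : ℝ, 1 ≤ K → ‖ψ x - ψK K x‖ ≤ c * (1 + ‖x‖) / K)
    -- `φ` is the (maximal) flow of `ψ` in `D`, with lifetime `Tmax`
    (Tmax : EuclideanSpace ℝ (Fin n) → ℝ≥0∞)
    (φ : EuclideanSpace ℝ (Fin n) → ℝ → EuclideanSpace ℝ (Fin n))
    (hTpos : ∀ x₀ ∈ D, 0 < Tmax x₀)
    (hinit : ∀ x₀ ∈ D, φ x₀ 0 = x₀)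
    (hmem : ∀ x₀ ∈ D, ∀ t : ℝ, 0 ≤ t → ENNReal.ofReal t < Tmax x₀ → φ x₀ t ∈ D)
    (hder : ∀ x₀ ∈ D, ∀ t : ℝ, 0 ≤ t → ENNReal.ofReal t < Tmax x₀ →
      HasDerivAt (φ x₀) (ψ (φ x₀ t)) t)
    (hmax : ∀ x₀ ∈ D, Tmax x₀ ≠ ⊤ → ∀ Kc : Set (EuclideanSpace ℝ (Fin n)),
      IsCompact Kc → Kc ⊆ D →
      ∀ᶠ t in nhdsWithin (Tmax x₀).toReal (Set.Iio (Tmax x₀).toReal), φ x₀ t ∉ Kc)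
    -- for each `K ≥ 1`, `φK K` is the (maximal) flow of `ψK K` in `D`,
    -- with lifetime `TK K`
    (TK : ℝ → EuclideanSpace ℝ (Fin n) → ℝ≥0∞)
    (φK : ℝ → EuclideanSpace ℝ (Fin n) → ℝ → EuclideanSpace ℝ (Fin n))
    (hTKpos : ∀ K : ℝ, 1 ≤ K → ∀ x₀ ∈ D, 0 < TK K x₀)
    (hinitK : ∀ K : ℝ, 1 ≤ K → ∀ x₀ ∈ D, φK K x₀ 0 = x₀)
    (hmemK : ∀ K : ℝ, 1 ≤ K → ∀ x₀ ∈ D, ∀ t : ℝ, 0 ≤ t →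
      ENNReal.ofReal t < TK K x₀ → φK K x₀ t ∈ D)
    (hderK : ∀ K : ℝ, 1 ≤ K → ∀ x₀ ∈ D, ∀ t : ℝ, 0 ≤ t →
      ENNReal.ofReal t < TK K x₀ → HasDerivAt (φK K x₀) (ψK K (φK K x₀ t)) t)
    (hmaxK : ∀ K : ℝ, 1 ≤ K → ∀ x₀ ∈ D, TK K x₀ ≠ ⊤ →
      ∀ Kc : Set (EuclideanSpace ℝ (Fin n)), IsCompact Kc → Kc ⊆ D →
      ∀ᶠ t in nhdsWithin (TK K x₀).toReal (Set.Iio (TK K x₀).toReal),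
        φK K x₀ t ∉ Kc) :
    ∃ L : ℝ, 0 ≤ L ∧ ∀ T : ℝ, 0 ≤ T → ∀ η : ℝ, 0 < η → ∀ K : ℝ, 1 ≤ K →
      2 * max (3 * c / μ) η * Real.exp ((L + 1 / (3 * c / μ)) * T) / ε ≤ K →
      ∀ x₀ ∈ D, ∀ x₁ ∈ D, ‖x₁ - x₀‖ ≤ η / K →
        min (TDeps D ε Tmax φ x₀) (ENNReal.ofReal T) ≤ TK K x₁ ∧
        ∀ t : ℝ, 0 ≤ t →
          ENNReal.ofReal t < min (TDeps D ε Tmax φ x₀) (ENNReal.ofReal T) →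
          ‖φ x₀ t - φK K x₁ t‖ ≤
            max (3 * c / μ) η * Real.exp ((L + 1 / (3 * c / μ)) * T) / K := by
  
  classical
  set Mc := 3 * c / μ with hMc
  have hMcpos : 0 < Mc := by positivity
  set C : Set (EuclideanSpace ℝ (Fin n)) := Metric.closedBall 0 (A + 2) ∩ closure D with hC
  have hCcomp : IsCompact C :=
    (isCompact_closedBall (0 : EuclideanSpace ℝ (Fin n)) (A + 2)).inter_right isClosed_closure
  have hCloc : ∀ x ∈ C, ∃ t ∈ nhdsWithin x C, ∃ L : NNReal, LipschitzOnWith L ψ t := by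
    intro x hx
    obtain ⟨t, ht, L, hL⟩ := hψLip x hx.2
    exact ⟨t, nhdsWithin_mono x Set.inter_subset_right ht, L, hL⟩
  obtain ⟨ℓ, hℓ0, hℓ⟩ := locallyLip_compact hCcomp hCloc
  refine ⟨ℓ + μ * A, by positivity, ?_⟩
  intro T hT η hη K hK1 hKbig x₀ hx₀ x₁ hx₁ hx01
  have hK0 : (0:ℝ) < K := lt_of_lt_of_le one_pos hK1
  set lam := ℓ + μ * A + 1 / Mc with hlam
  have hlam_pos : 0 < lam := by positivity
  set M := max Mc η with hM
  have hMpos : 0 < M := lt_of_lt_of_le hMcpos (le_max_left _ _)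
  set R : ℝ → ℝ := fun t => M * Real.exp (lam * t) / K with hR
  have hRpos : ∀ t, 0 < R t := fun t => by simp only [hR]; positivity
  have hRmono : ∀ s t : ℝ, s ≤ t → R s ≤ R t := by
    intro s t hst
    simp only [hR]
    gcongr
  have hRT : R T ≤ ε / 2 := by
    rw [div_le_iff₀ hε.1] at hKbig
    simp only [hR]
    rw [div_le_iff₀ hK0]
    nlinarith
  have hRlow : ∀ s : ℝ, 0 ≤ s → Mc / K ≤ R s := by
    intro s hs
    have h1 : (1:ℝ) ≤ Real.exp (lam * s) := Real.one_le_exp (by positivity)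
    have h2 : Mc ≤ M * Real.exp (lam * s) := by nlinarith [le_max_left Mc η]
    simp only [hR]
    gcongr
  set TD := TDeps D ε Tmax φ x₀ with hTD
  have hTD_le_Tmax : TD ≤ Tmax x₀ := by
    rw [hTD]; exact sSup_le fun b hb => hb.1.le
  have hball : ∀ s : ℝ, 0 ≤ s → ENNReal.ofReal s < TD →
      Metric.closedBall (φ x₀ s) ε ⊆ D := by
    intro s hs hlt
    rw [hTD, TDeps, lt_sSup_iff] at hlt
    obtain ⟨b, hb, hlt⟩ := hlt
    exact hb.2 s hs hlt.le
  -- the key Gronwall-type estimate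
  have key : ∀ b : ℝ, 0 ≤ b → ENNReal.ofReal b < min TD (ENNReal.ofReal T) →
      ENNReal.ofReal b < TK K x₁ → ∀ s ∈ Set.Icc 0 b, ‖φ x₀ s - φK K x₁ s‖ ≤ R s := by
    intro b hb0 hbt hbK
    have hbTD : ENNReal.ofReal b < TD := lt_of_lt_of_le hbt (min_le_left _ _)
    have hbT : b < T := by
      have h := lt_of_lt_of_le hbt (min_le_right _ _)
      exact (ENNReal.ofReal_lt_ofReal_iff_of_nonneg hb0).1 h
    have hsf : ∀ s ∈ Set.Icc (0:ℝ) b,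
        ENNReal.ofReal s < TD ∧ ENNReal.ofReal s < TK K x₁ := by
      intro s hs
      have h1 : ENNReal.ofReal s ≤ ENNReal.ofReal b := ENNReal.ofReal_le_ofReal hs.2
      exact ⟨lt_of_le_of_lt h1 hbTD, lt_of_le_of_lt h1 hbK⟩
    have hxD : ∀ s ∈ Set.Icc (0:ℝ) b, φ x₀ s ∈ D := fun s hs =>
      hmem x₀ hx₀ s hs.1 (lt_of_lt_of_le (hsf s hs).1 hTD_le_Tmax)
    have hyD : ∀ s ∈ Set.Icc (0:ℝ) b, φK K x₁ s ∈ D := fun s hs =>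
      hmemK K hK1 x₁ hx₁ s hs.1 (hsf s hs).2
    set u : ℝ → EuclideanSpace ℝ (Fin n) := fun s => φ x₀ s - φK K x₁ s with hu
    set du : ℝ → EuclideanSpace ℝ (Fin n) :=
      fun s => ψ (φ x₀ s) - ψK K (φK K x₁ s) with hdu
    have hud : ∀ s ∈ Set.Icc (0:ℝ) b, HasDerivAt u (du s) s := fun s hs =>
      (hder x₀ hx₀ s hs.1 (lt_of_lt_of_le (hsf s hs).1 hTD_le_Tmax)).sub
        (hderK K hK1 x₁ hx₁ s hs.1 (hsf s hs).2)
    have hfd : ∀ s ∈ Set.Icc (0:ℝ) b,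
        HasDerivAt (fun t => ‖u t‖ ^ 2) (2 * (inner ℝ (du s) (u s) : ℝ)) s := by
      intro s hs
      have h := (hud s hs).inner ℝ (hud s hs)
      have heq : (fun t => (inner ℝ (u t) (u t) : ℝ)) = fun t => ‖u t‖ ^ 2 := by
        funext t; exact real_inner_self_eq_norm_sq (u t)
      rw [heq] at h
      refine h.congr_deriv ?_
      rw [real_inner_comm (u s) (du s)]
      ring
    have hRd : ∀ s : ℝ, HasDerivAt (fun s => R s ^ 2) (2 * lam * R s ^ 2) s := by
      intro s
      have h1 : HasDerivAt (fun t : ℝ => lam * t) lam s := by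
        simpa using (hasDerivAt_id s).const_mul lam
      have h2 := (Real.hasDerivAt_exp (lam * s)).comp s h1
      have h3 := (h2.const_mul M).div_const K
      have h4 : HasDerivAt R (lam * R s) s := by
        refine h3.congr_deriv ?_
        simp only [hR]; ring
      have h5 := h4.pow 2
      refine h5.congr_deriv ?_
      ring
    have main : ∀ s ∈ Set.Icc (0:ℝ) b, ‖u s‖ ^ 2 ≤ R s ^ 2 := by
      refine image_le_of_deriv_right_lt_deriv_boundary
        (f := fun t => ‖u t‖ ^ 2) (f' := fun s => 2 * (inner ℝ (du s) (u s) : ℝ))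
        (B := fun s => R s ^ 2) (B' := fun s => 2 * lam * R s ^ 2) ?_ ?_ ?_ ?_ ?_
      · exact fun s hs => (hfd s hs).continuousAt.continuousWithinAt
      · exact fun s hs => (hfd s (Set.Ico_subset_Icc_self hs)).hasDerivWithinAt
      · -- initial condition
        have h0 : ‖u 0‖ ≤ R 0 := by
          have hu0 : u 0 = x₀ - x₁ := by
            simp only [hu, hinit x₀ hx₀, hinitK K hK1 x₁ hx₁]
          rw [hu0]
          calc ‖x₀ - x₁‖ = ‖x₁ - x₀‖ := norm_sub_rev _ _
            _ ≤ η / K := hx01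
            _ ≤ M / K := by gcongr; exact le_max_right _ _
            _ ≤ R 0 := by
                have := hRlow 0 le_rfl
                have h2 : η ≤ M := le_max_right _ _
                simp only [hR]
                gcongr
                nlinarith [Real.one_le_exp (le_of_eq (mul_zero lam).symm)]
        exact pow_le_pow_left₀ (norm_nonneg _) h0 2
      · exact fun s => hRd s
      · -- the crossing bound
        intro s hs hfB
        show 2 * (inner ℝ (du s) (u s) : ℝ) < 2 * lam * R s ^ 2
        have hs' : s ∈ Set.Icc (0:ℝ) b := Set.Ico_subset_Icc_self hs
        have hRs := hRpos s
        have hfB' : ‖u s‖ ^ 2 = R s ^ 2 := hfB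
        have hnorm : ‖u s‖ = R s := by
          have h1 : |‖u s‖| = |R s| := by
            rw [← Real.sqrt_sq_eq_abs, ← Real.sqrt_sq_eq_abs, hfB']
          rwa [abs_of_nonneg (norm_nonneg _), abs_of_nonneg hRs.le] at h1
        have hxD' : φ x₀ s ∈ D := hxD s hs'
        have hyD' : φK K x₁ s ∈ D := hyD s hs'
        have hxyR : ‖φ x₀ s - φK K x₁ s‖ = R s := hnorm
        have hsT : s ≤ T := le_trans hs.2.le hbT.le
        have hRs_half : R s ≤ ε / 2 := le_trans (hRmono s T hsT) hRT
        have hRs_eps : R s ≤ ε := by linarith [hε.1]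
        have hmuR : 3 * c / K ≤ μ * R s := by
          have h2 := mul_le_mul_of_nonneg_left (hRlow s hs.1) hμ.le
          calc 3 * c / K = μ * (Mc / K) := by
                rw [hMc]; field_simp
            _ ≤ μ * R s := h2
        have hyx : ‖φK K x₁ s‖ ≤ ‖φ x₀ s‖ + 1 := by
          have h1 : ‖φK K x₁ s‖ = ‖φ x₀ s - (φ x₀ s - φK K x₁ s)‖ := by
            congr 1; abel
          rw [h1]
          calc ‖φ x₀ s - (φ x₀ s - φK K x₁ s)‖
              ≤ ‖φ x₀ s‖ + ‖φ x₀ s - φK K x₁ s‖ := norm_sub_le _ _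
            _ ≤ ‖φ x₀ s‖ + 1 := by rw [hxyR]; linarith [hε.2]
        have hinner2 : (inner ℝ (ψ (φK K x₁ s) - ψK K (φK K x₁ s))
            (φ x₀ s - φK K x₁ s) : ℝ) ≤ c * (1 + ‖φK K x₁ s‖) / K * R s := by
          calc (inner ℝ (ψ (φK K x₁ s) - ψK K (φK K x₁ s)) (φ x₀ s - φK K x₁ s) : ℝ)
              ≤ ‖ψ (φK K x₁ s) - ψK K (φK K x₁ s)‖ * ‖φ x₀ s - φK K x₁ s‖ :=
                real_inner_le_norm _ _
            _ ≤ c * (1 + ‖φK K x₁ s‖) / K * R s := by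
                rw [hxyR]
                exact mul_le_mul_of_nonneg_right (hA2 _ hyD' K hK1) hRs.le
        have hsplit : (inner ℝ (du s) (u s) : ℝ) =
            inner ℝ (ψ (φ x₀ s) - ψ (φK K x₁ s)) (φ x₀ s - φK K x₁ s) +
            inner ℝ (ψ (φK K x₁ s) - ψK K (φK K x₁ s)) (φ x₀ s - φK K x₁ s) := by
          have hdus : du s = (ψ (φ x₀ s) - ψ (φK K x₁ s)) +
              (ψ (φK K x₁ s) - ψK K (φK K x₁ s)) := by
            simp only [hdu]; abel
          have hus : u s = φ x₀ s - φK K x₁ s := rfl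
          rw [hdus, hus, inner_add_left]
        have hBpos : 0 < 2 * lam * R s ^ 2 := by positivity
        rcases le_or_gt A ‖φ x₀ s‖ with hbig | hsmall
        · have h1 := hA1 (φ x₀ s) hxD' hbig (φK K x₁ s) hyD'
            (by rw [norm_sub_rev, hxyR]; exact hRs_eps)
          rw [hxyR] at h1
          have hxnorm : (1:ℝ) ≤ ‖φ x₀ s‖ := le_trans hA hbig
          have h2 : c * (1 + ‖φK K x₁ s‖) / K ≤ 3 * c * ‖φ x₀ s‖ / K := by
            have h2' : c * (1 + ‖φK K x₁ s‖) ≤ 3 * c * ‖φ x₀ s‖ := by nlinarith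
            exact (div_le_div_iff_of_pos_right hK0).2 h2'
          have hI : (inner ℝ (du s) (u s) : ℝ) ≤ 0 := by
            rw [hsplit]
            have h3 : c * (1 + ‖φK K x₁ s‖) / K * R s ≤ μ * R s * ‖φ x₀ s‖ * R s := by
              have h4 : 3 * c * ‖φ x₀ s‖ / K ≤ μ * R s * ‖φ x₀ s‖ := by
                have := mul_le_mul_of_nonneg_right hmuR (norm_nonneg (φ x₀ s))
                calc 3 * c * ‖φ x₀ s‖ / K = 3 * c / K * ‖φ x₀ s‖ := by ring
                  _ ≤ μ * R s * ‖φ x₀ s‖ := this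
              nlinarith [le_trans h2 h4, hRs.le]
            nlinarith [hinner2, h1, norm_nonneg (φ x₀ s)]
          nlinarith [hI, hBpos]
        · have hxC : φ x₀ s ∈ C := by
            refine ⟨?_, subset_closure hxD'⟩
            rw [Metric.mem_closedBall, dist_zero_right]
            linarith
          have hyC : φK K x₁ s ∈ C := by
            refine ⟨?_, subset_closure hyD'⟩
            rw [Metric.mem_closedBall, dist_zero_right]
            linarith
          have hlip := hℓ (φ x₀ s) hxC (φK K x₁ s) hyC
          rw [dist_eq_norm, dist_eq_norm] at hlip
          have hinner1 : (inner ℝ (ψ (φ x₀ s) - ψ (φK K x₁ s))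
              (φ x₀ s - φK K x₁ s) : ℝ) ≤ ℓ * R s ^ 2 := by
            calc (inner ℝ (ψ (φ x₀ s) - ψ (φK K x₁ s)) (φ x₀ s - φK K x₁ s) : ℝ)
                ≤ ‖ψ (φ x₀ s) - ψ (φK K x₁ s)‖ * ‖φ x₀ s - φK K x₁ s‖ :=
                  real_inner_le_norm _ _
              _ ≤ ℓ * ‖φ x₀ s - φK K x₁ s‖ * ‖φ x₀ s - φK K x₁ s‖ :=
                  mul_le_mul_of_nonneg_right hlip (norm_nonneg _)
              _ = ℓ * R s ^ 2 := by rw [hxyR]; ring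
          have h2 : c * (1 + ‖φK K x₁ s‖) / K ≤ μ * A * R s := by
            have h3 : 1 + ‖φK K x₁ s‖ ≤ 3 * A := by linarith
            calc c * (1 + ‖φK K x₁ s‖) / K ≤ c * (3 * A) / K := by gcongr
              _ = A * (3 * c / K) := by ring
              _ ≤ A * (μ * R s) := by
                  apply mul_le_mul_of_nonneg_left hmuR (by linarith)
              _ = μ * A * R s := by ring
          have h4 : (inner ℝ (ψ (φK K x₁ s) - ψK K (φK K x₁ s))
              (φ x₀ s - φK K x₁ s) : ℝ) ≤ μ * A * R s * R s :=
            le_trans hinner2 (mul_le_mul_of_nonneg_right h2 hRs.le)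
          have h5 : 0 < 1 / Mc * R s ^ 2 := by positivity
          rw [hsplit, hlam]
          nlinarith [hinner1, h4, h5]
    intro s hsmem
    have h := main s hsmem
    have h2 : ‖u s‖ = ‖φ x₀ s - φK K x₁ s‖ := rfl
    nlinarith [norm_nonneg (u s), hRpos s]
  -- lifetime lower bound
  have goal1 : min TD (ENNReal.ofReal T) ≤ TK K x₁ := by
    by_contra hcon
    push_neg at hcon
    have hTKtop : TK K x₁ ≠ ⊤ := hcon.ne_top
    set τ := (TK K x₁).toReal with hτ
    have hofτ : ENNReal.ofReal τ = TK K x₁ := ENNReal.ofReal_toReal hTKtop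
    have hτ0 : 0 < τ := ENNReal.toReal_pos (hTKpos K hK1 x₁ hx₁).ne' hTKtop
    have hτTD : ENNReal.ofReal τ < TD := by
      rw [hofτ]; exact lt_of_lt_of_le hcon (min_le_left _ _)
    have hτT : τ < T := by
      have h1 : ENNReal.ofReal τ < ENNReal.ofReal T := by
        rw [hofτ]; exact lt_of_lt_of_le hcon (min_le_right _ _)
      exact (ENNReal.ofReal_lt_ofReal_iff_of_nonneg hτ0.le).1 h1
    have hφc : ∀ s ∈ Set.Icc (0:ℝ) τ, ContinuousAt (φ x₀) s := by
      intro s hs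
      have h1 : ENNReal.ofReal s < Tmax x₀ :=
        lt_of_le_of_lt (ENNReal.ofReal_le_ofReal hs.2) (lt_of_lt_of_le hτTD hTD_le_Tmax)
      exact (hder x₀ hx₀ s hs.1 h1).continuousAt
    set Kc := (fun p : ℝ × EuclideanSpace ℝ (Fin n) => φ x₀ p.1 + p.2) ''
      (Set.Icc 0 τ ×ˢ Metric.closedBall 0 (ε / 2)) with hKc
    have hKcComp : IsCompact Kc := by
      apply IsCompact.image_of_continuousOn
      · exact isCompact_Icc.prod (isCompact_closedBall _ _)
      · intro p hp
        exact (((hφc p.1 hp.1).comp continuousAt_fst).add continuousAt_snd).continuousWithinAt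
    have hKcD : Kc ⊆ D := by
      rintro z ⟨⟨s, v⟩, ⟨hs, hv⟩, rfl⟩
      have hball' := hball s hs.1 (lt_of_le_of_lt (ENNReal.ofReal_le_ofReal hs.2) hτTD)
      apply hball'
      rw [Metric.mem_closedBall]
      have hvn : ‖v‖ ≤ ε / 2 := by
        rw [Metric.mem_closedBall, dist_zero_right] at hv
        exact hv
      have : dist (φ x₀ s + v) (φ x₀ s) = ‖v‖ := by
        rw [dist_eq_norm]
        congr 1
        abel
      rw [this]
      linarith [hε.1]
    have hev := hmaxK K hK1 x₁ hx₁ hTKtop Kc hKcComp hKcD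
    rw [← hτ] at hev
    have hev2 : ∀ᶠ s in nhdsWithin τ (Set.Iio τ), s ∈ Set.Ioo 0 τ :=
      Filter.eventually_of_mem (Ioo_mem_nhdsLT_of_mem ⟨hτ0, le_rfl⟩) (fun s hs => hs)
    obtain ⟨s, hnot, hs⟩ := (hev.and hev2).exists
    apply hnot
    have hsτ : ENNReal.ofReal s < ENNReal.ofReal τ :=
      (ENNReal.ofReal_lt_ofReal_iff hτ0).2 hs.2
    have hsTK : ENNReal.ofReal s < TK K x₁ := by rw [← hofτ]; exact hsτ
    have hsmin : ENNReal.ofReal s < min TD (ENNReal.ofReal T) := by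
      rw [← hofτ] at hcon
      exact lt_trans hsτ (lt_of_eq_of_lt hofτ (hofτ ▸ (hofτ.symm ▸ hcon)))
    have hkey := key s hs.1.le hsmin hsTK s ⟨hs.1.le, le_rfl⟩
    refine ⟨(s, φK K x₁ s - φ x₀ s), ⟨⟨hs.1.le, hs.2.le⟩, ?_⟩, ?_⟩
    · rw [Metric.mem_closedBall, dist_zero_right]
      calc ‖φK K x₁ s - φ x₀ s‖ = ‖φ x₀ s - φK K x₁ s‖ := norm_sub_rev _ _
        _ ≤ R s := hkey
        _ ≤ R T := hRmono s T (by linarith [hs.1, hs.2])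
        _ ≤ ε / 2 := hRT
    · show φ x₀ s + (φK K x₁ s - φ x₀ s) = φK K x₁ s
      abel
  refine ⟨goal1, ?_⟩
  intro t ht0 htlt
  have htTK : ENNReal.ofReal t < TK K x₁ := lt_of_lt_of_le htlt goal1
  have hkey' := key t ht0 htlt htTK t ⟨ht0, le_rfl⟩
  have htT : t ≤ T := by
    have h1 : ENNReal.ofReal t < ENNReal.ofReal T := lt_of_lt_of_le htlt (min_le_right _ _)
    exact ((ENNReal.ofReal_lt_ofReal_iff_of_nonneg ht0).1 h1).le
  calc ‖φ x₀ t - φK K x₁ t‖ ≤ R t := hkey'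
    _ ≤ R T := hRmono t T htT
    _ = M * Real.exp (lam * T) / K := rfl
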